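/- The images of the generators s_a (a ∈ A) span a central abelian Lie subalgebra, and the Lie algebra t̃_A decomposes as a direct sum: there is a Lie algebra isomorphism from t̃_A onto the product Lie algebra t_A × (A → ℚ) (where A → ℚ carries the trivial (abelian) Lie bracket), which sends the class of each generator t_{ab} to (t_{ab}, 0) and the class of each generator s_a to (0, e_a), where e_a denotes the indicator function of a. -/

import Mathlib

/-! The extended Drinfeld–Kohno Lie algebra `t̃_A` decomposes as `t_A × (A → ℚ)`. -/

/-- Generators `t_{ab}` of the Drinfeld–Kohno Lie algebra `t_A`. -/
inductive TGen (A : Type) : Type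
  | t : (a b : A) → a ≠ b → TGen A

/-- Generators `t_{ab}` and `s_a` of the extended Drinfeld–Kohno Lie algebra `t̃_A`. -/
inductive ExtGen (A : Type) : Type
  | t : (a b : A) → a ≠ b → ExtGen A
  | s : A → ExtGen A

open FreeLieAlgebra in
/-- The defining relations of `t_A`. -/
def tRels (A : Type) : Set (FreeLieAlgebra ℚ (TGen A)) :=
  {x | ∃ (a b : A) (h : a ≠ b),
      x = of ℚ (TGen.t a b h) - of ℚ (TGen.t b a h.symm)} ∪
  {x | ∃ (a b c d : A) (h₁ : a ≠ b) (h₂ : c ≠ d),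
      a ≠ c ∧ a ≠ d ∧ b ≠ c ∧ b ≠ d ∧
      x = ⁅of ℚ (TGen.t a b h₁), of ℚ (TGen.t c d h₂)⁆} ∪
  {x | ∃ (a b c : A) (hab : a ≠ b) (hbc : b ≠ c) (hac : a ≠ c),
      x = ⁅of ℚ (TGen.t a c hac), of ℚ (TGen.t a b hab) + of ℚ (TGen.t b c hbc)⁆}

open FreeLieAlgebra in
/-- The defining relations of `t̃_A`: the relations of `t_A` together with the
centrality of the `s_a`. -/
def extRels (A : Type) : Set (FreeLieAlgebra ℚ (ExtGen A)) :=
  {x | ∃ (a b : A) (h : a ≠ b),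
      x = of ℚ (ExtGen.t a b h) - of ℚ (ExtGen.t b a h.symm)} ∪
  {x | ∃ (a b c d : A) (h₁ : a ≠ b) (h₂ : c ≠ d),
      a ≠ c ∧ a ≠ d ∧ b ≠ c ∧ b ≠ d ∧
      x = ⁅of ℚ (ExtGen.t a b h₁), of ℚ (ExtGen.t c d h₂)⁆} ∪
  {x | ∃ (a b c : A) (hab : a ≠ b) (hbc : b ≠ c) (hac : a ≠ c),
      x = ⁅of ℚ (ExtGen.t a c hac), of ℚ (ExtGen.t a b hab) + of ℚ (ExtGen.t b c hbc)⁆} ∪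
  {x | ∃ (a : A) (g : ExtGen A), x = ⁅of ℚ (ExtGen.s a), of ℚ g⁆}

/-- The Lie ideal generated by the relations of `t_A`. -/
noncomputable def tIdeal (A : Type) : LieIdeal ℚ (FreeLieAlgebra ℚ (TGen A)) :=
  LieSubmodule.lieSpan ℚ _ (tRels A)

/-- The Lie ideal generated by the relations of `t̃_A`. -/
noncomputable def extIdeal (A : Type) : LieIdeal ℚ (FreeLieAlgebra ℚ (ExtGen A)) :=
  LieSubmodule.lieSpan ℚ _ (extRels A)

/-- The Drinfeld–Kohno Lie algebra `t_A`. -/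
abbrev DKt (A : Type) := FreeLieAlgebra ℚ (TGen A) ⧸ tIdeal A

/-- The extended Drinfeld–Kohno Lie algebra `t̃_A`. -/
abbrev DKtTilde (A : Type) := FreeLieAlgebra ℚ (ExtGen A) ⧸ extIdeal A

/-- The class of the generator `t_{ab}` in `t_A`. -/
noncomputable def tcl {A : Type} (a b : A) (h : a ≠ b) : DKt A :=
  LieSubmodule.Quotient.mk (N := tIdeal A) (FreeLieAlgebra.of ℚ (TGen.t a b h))

/-- The class of the generator `t_{ab}` in `t̃_A`. -/
noncomputable def ttcl {A : Type} (a b : A) (h : a ≠ b) : DKtTilde A :=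
  LieSubmodule.Quotient.mk (N := extIdeal A) (FreeLieAlgebra.of ℚ (ExtGen.t a b h))

/-- The class of the generator `s_a` in `t̃_A`. -/
noncomputable def scl {A : Type} (a : A) : DKtTilde A :=
  LieSubmodule.Quotient.mk (N := extIdeal A) (FreeLieAlgebra.of ℚ (ExtGen.s a))

section ProdLie

variable {L M : Type} [LieRing L] [LieRing M]

/-- Componentwise bracket on a product. -/
instance Prod.instLieRingBracket : Bracket (L × M) (L × M) :=
  ⟨fun x y => (⁅x.1, y.1⁆, ⁅x.2, y.2⁆)⟩

@[simp] theorem Prod.bracket_def (x y : L × M) :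
    ⁅x, y⁆ = (⁅x.1, y.1⁆, ⁅x.2, y.2⁆) := rfl

/-- The product of two Lie rings, with componentwise bracket. -/
instance Prod.instLieRing : LieRing (L × M) where
  add_lie x y z := by ext <;> simp
  lie_add x y z := by ext <;> simp
  lie_self x := by ext <;> simp
  leibniz_lie x y z := by ext <;> simp

/-- The product of two Lie algebras. -/
instance Prod.instLieAlgebra (R : Type*) [CommRing R] [LieAlgebra R L] [LieAlgebra R M] :
    LieAlgebra R (L × M) where
  lie_smul t x y := by ext <;> simp

end ProdLie

attribute [local instance 100] LieRing.ofAssociativeRing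

section Construction

open FreeLieAlgebra

variable {A : Type} [Fintype A] [DecidableEq A]

/-- Two Lie homs out of a free Lie algebra agreeing on generators are equal. -/
theorem freeLie_hom_ext {X : Type} {L : Type*} [LieRing L] [LieAlgebra ℚ L]
    {F G : FreeLieAlgebra ℚ X →ₗ⁅ℚ⁆ L} (h : ∀ x, F (of ℚ x) = G (of ℚ x)) : F = G :=
  (FreeLieAlgebra.lift ℚ).symm.injective (funext h)

/-- The quotient map as a morphism of Lie algebras. -/
noncomputable def qmap {L : Type*} [LieRing L] [LieAlgebra ℚ L] (I : LieIdeal ℚ L) :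
    L →ₗ⁅ℚ⁆ L ⧸ I :=
  { Submodule.mkQ (I : Submodule ℚ L) with
    map_lie' := fun {x y} => LieSubmodule.Quotient.mk_bracket I x y }

theorem qmap_apply {L : Type*} [LieRing L] [LieAlgebra ℚ L] (I : LieIdeal ℚ L) (x : L) :
    qmap I x = LieSubmodule.Quotient.mk (N := I) x := rfl

theorem qmap_eq_zero {L : Type*} [LieRing L] [LieAlgebra ℚ L] (I : LieIdeal ℚ L)
    {x : L} (hx : x ∈ I) : qmap I x = 0 := by
  rw [qmap_apply, LieSubmodule.Quotient.mk_eq_zero']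
  exact hx

/-- Lift a Lie hom through the quotient by an ideal contained in its kernel. -/
noncomputable def qlift {L M : Type*} [LieRing L] [LieAlgebra ℚ L] [LieRing M]
    [LieAlgebra ℚ M] (I : LieIdeal ℚ L) (F : L →ₗ⁅ℚ⁆ M)
    (h : ∀ x ∈ I, F x = 0) : (L ⧸ I) →ₗ⁅ℚ⁆ M :=
  { Submodule.liftQ (I : Submodule ℚ L) F.toLinearMap (fun x hx => h x hx) with
    map_lie' := by
      rintro ⟨x⟩ ⟨y⟩
      show Submodule.liftQ _ _ _ ⁅LieSubmodule.Quotient.mk (N := I) x,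
        LieSubmodule.Quotient.mk (N := I) y⁆ = _
      rw [← LieSubmodule.Quotient.mk_bracket]
      exact F.map_lie x y }

theorem qlift_mk {L M : Type*} [LieRing L] [LieAlgebra ℚ L] [LieRing M]
    [LieAlgebra ℚ M] (I : LieIdeal ℚ L) (F : L →ₗ⁅ℚ⁆ M)
    (h : ∀ x ∈ I, F x = 0) (x : L) :
    qlift I F h (LieSubmodule.Quotient.mk (N := I) x) = F x := rfl

theorem tcl_eq (a b : A) (h : a ≠ b) :
    tcl a b h = qmap (tIdeal A) (of ℚ (TGen.t a b h)) := rfl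

theorem ttcl_eq (a b : A) (h : a ≠ b) :
    ttcl a b h = qmap (extIdeal A) (of ℚ (ExtGen.t a b h)) := rfl

theorem scl_eq (a : A) : scl a = qmap (extIdeal A) (of ℚ (ExtGen.s a)) := rfl

theorem trel1 (a b : A) (h : a ≠ b) : tcl a b h - tcl b a h.symm = 0 := by
  rw [tcl_eq, tcl_eq, ← map_sub (qmap (tIdeal A))]
  exact qmap_eq_zero _ (LieSubmodule.subset_lieSpan (Or.inl (Or.inl ⟨a, b, h, rfl⟩)))

theorem trel2 (a b c d : A) (h₁ : a ≠ b) (h₂ : c ≠ d) (hac : a ≠ c) (had : a ≠ d)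
    (hbc : b ≠ c) (hbd : b ≠ d) : ⁅tcl a b h₁, tcl c d h₂⁆ = 0 := by
  rw [tcl_eq, tcl_eq, ← LieHom.map_lie]
  exact qmap_eq_zero _ (LieSubmodule.subset_lieSpan
    (Or.inl (Or.inr ⟨a, b, c, d, h₁, h₂, hac, had, hbc, hbd, rfl⟩)))

theorem trel3 (a b c : A) (hab : a ≠ b) (hbc : b ≠ c) (hac : a ≠ c) :
    ⁅tcl a c hac, tcl a b hab + tcl b c hbc⁆ = 0 := by
  rw [tcl_eq, tcl_eq, tcl_eq, ← map_add (qmap (tIdeal A)), ← LieHom.map_lie]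
  exact qmap_eq_zero _ (LieSubmodule.subset_lieSpan
    (Or.inr ⟨a, b, c, hab, hbc, hac, rfl⟩))

theorem ttrel1 (a b : A) (h : a ≠ b) : ttcl a b h - ttcl b a h.symm = 0 := by
  rw [ttcl_eq, ttcl_eq, ← map_sub (qmap (extIdeal A))]
  exact qmap_eq_zero _ (LieSubmodule.subset_lieSpan
    (Or.inl (Or.inl (Or.inl ⟨a, b, h, rfl⟩))))

theorem ttrel2 (a b c d : A) (h₁ : a ≠ b) (h₂ : c ≠ d) (hac : a ≠ c) (had : a ≠ d)
    (hbc : b ≠ c) (hbd : b ≠ d) : ⁅ttcl a b h₁, ttcl c d h₂⁆ = 0 := by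
  rw [ttcl_eq, ttcl_eq, ← LieHom.map_lie]
  exact qmap_eq_zero _ (LieSubmodule.subset_lieSpan
    (Or.inl (Or.inl (Or.inr ⟨a, b, c, d, h₁, h₂, hac, had, hbc, hbd, rfl⟩))))

theorem ttrel3 (a b c : A) (hab : a ≠ b) (hbc : b ≠ c) (hac : a ≠ c) :
    ⁅ttcl a c hac, ttcl a b hab + ttcl b c hbc⁆ = 0 := by
  rw [ttcl_eq, ttcl_eq, ttcl_eq, ← map_add (qmap (extIdeal A)), ← LieHom.map_lie]
  exact qmap_eq_zero _ (LieSubmodule.subset_lieSpan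
    (Or.inl (Or.inr ⟨a, b, c, hab, hbc, hac, rfl⟩)))

theorem pi_lie_eq_zero (f g : A → ℚ) : ⁅f, g⁆ = 0 := by
  ext x; simp [Ring.lie_def, mul_comm]

/-- The generators of the free Lie algebra on `ExtGen A` sent to `t_A × (A → ℚ)`. -/
noncomputable def phiGen (A : Type) [Fintype A] [DecidableEq A] :
    ExtGen A → DKt A × (A → ℚ)
  | ExtGen.t a b h => (tcl a b h, 0)
  | ExtGen.s a => (0, Pi.single a 1)

/-- The forward map on the free Lie algebra. -/
noncomputable def phiTilde (A : Type) [Fintype A] [DecidableEq A] :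
    FreeLieAlgebra ℚ (ExtGen A) →ₗ⁅ℚ⁆ DKt A × (A → ℚ) :=
  FreeLieAlgebra.lift ℚ (phiGen A)

theorem phiTilde_of (g : ExtGen A) : phiTilde A (of ℚ g) = phiGen A g :=
  lift_of_apply _ _

theorem phiTilde_vanish : ∀ x ∈ extIdeal A, phiTilde A x = 0 := by
  intro x hx
  have hle : extIdeal A ≤ (phiTilde A).ker := by
    rw [extIdeal, LieSubmodule.lieSpan_le]
    rintro z (((⟨a, b, h, rfl⟩ | ⟨a, b, c, d, h₁, h₂, hac, had, hbc, hbd, rfl⟩) |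
      ⟨a, b, c, hab, hbc, hac, rfl⟩) | ⟨a, g, rfl⟩) <;>
      rw [SetLike.mem_coe, LieHom.mem_ker]
    · rw [map_sub, phiTilde_of, phiTilde_of]
      show ((tcl a b h, 0) : DKt A × (A → ℚ)) - (tcl b a h.symm, 0) = 0
      rw [Prod.ext_iff]
      constructor
      · show tcl a b h - tcl b a h.symm = 0
        exact trel1 a b h
      · show (0 : A → ℚ) - 0 = 0
        simp
    · rw [LieHom.map_lie, phiTilde_of, phiTilde_of]
      show ⁅((tcl a b h₁, 0) : DKt A × (A → ℚ)), (tcl c d h₂, 0)⁆ = 0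
      rw [Prod.bracket_def, Prod.ext_iff]
      exact ⟨trel2 a b c d h₁ h₂ hac had hbc hbd, pi_lie_eq_zero _ _⟩
    · rw [LieHom.map_lie, map_add, phiTilde_of, phiTilde_of, phiTilde_of]
      show ⁅((tcl a c hac, 0) : DKt A × (A → ℚ)),
        (tcl a b hab, 0) + (tcl b c hbc, 0)⁆ = 0
      have hadd : ((tcl a b hab, 0) : DKt A × (A → ℚ)) + (tcl b c hbc, 0)
          = (tcl a b hab + tcl b c hbc, 0) := by
        rw [Prod.mk_add_mk, add_zero]
      rw [hadd, Prod.bracket_def, Prod.ext_iff]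
      exact ⟨trel3 a b c hab hbc hac, pi_lie_eq_zero _ _⟩
    · rw [LieHom.map_lie, phiTilde_of, phiTilde_of]
      rw [Prod.bracket_def, Prod.ext_iff]
      refine ⟨?_, pi_lie_eq_zero _ _⟩
      have h0 : (phiGen A (ExtGen.s a)).1 = (0 : DKt A) := rfl
      show ⁅(phiGen A (ExtGen.s a)).1, (phiGen A g).1⁆ = (0 : DKt A × (A → ℚ)).1
      rw [h0, zero_lie]
      rfl
  simpa using hle hx

/-- The induced Lie algebra morphism `t̃_A → t_A × (A → ℚ)`. -/
noncomputable def phi (A : Type) [Fintype A] [DecidableEq A] :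
    DKtTilde A →ₗ⁅ℚ⁆ DKt A × (A → ℚ) :=
  qlift (extIdeal A) (phiTilde A) phiTilde_vanish

theorem phi_ttcl (a b : A) (h : a ≠ b) : phi A (ttcl a b h) = (tcl a b h, 0) := by
  rw [ttcl, phi, qlift_mk]
  exact phiTilde_of _

theorem phi_scl (a : A) : phi A (scl a) = (0, Pi.single a 1) := by
  rw [scl, phi, qlift_mk]
  exact phiTilde_of _

/-- Centrality of the `s_a`, at the level of the free Lie algebra. -/
theorem central_aux (a : A) (z : FreeLieAlgebra ℚ (ExtGen A)) :
    ⁅of ℚ (ExtGen.s a), z⁆ ∈ extIdeal A := by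
  let K : LieSubalgebra ℚ (FreeLieAlgebra ℚ (ExtGen A)) :=
    { carrier := {x | ⁅of ℚ (ExtGen.s a), x⁆ ∈ extIdeal A}
      add_mem' := by
        intro x y hx hy
        show ⁅of ℚ (ExtGen.s a), x + y⁆ ∈ extIdeal A
        rw [lie_add]
        exact add_mem hx hy
      zero_mem' := by
        show ⁅of ℚ (ExtGen.s a), (0 : FreeLieAlgebra ℚ (ExtGen A))⁆ ∈ extIdeal A
        rw [lie_zero]
        exact zero_mem _
      smul_mem' := by
        intro t x hx
        show ⁅of ℚ (ExtGen.s a), t • x⁆ ∈ extIdeal A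
        rw [lie_smul]
        exact SMulMemClass.smul_mem t hx
      lie_mem' := by
        intro x y hx hy
        show ⁅of ℚ (ExtGen.s a), ⁅x, y⁆⁆ ∈ extIdeal A
        rw [leibniz_lie]
        refine add_mem ?_ ((extIdeal A).lie_mem hy)
        rw [← lie_skew]
        exact neg_mem ((extIdeal A).lie_mem hx) }
  have hK : ∀ g : ExtGen A, of ℚ g ∈ K := fun g =>
    LieSubmodule.subset_lieSpan (Or.inr ⟨a, g, rfl⟩)
  have key : ∀ w : FreeLieAlgebra ℚ (ExtGen A), w ∈ K := by
    intro w
    let f : ExtGen A → K := fun g => ⟨of ℚ g, hK g⟩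
    have hcomp : K.incl.comp (FreeLieAlgebra.lift ℚ f) = LieHom.id := by
      apply freeLie_hom_ext
      intro g
      show K.incl (FreeLieAlgebra.lift ℚ f (of ℚ g)) = of ℚ g
      rw [lift_of_apply]
      rfl
    have hw := LieHom.congr_fun hcomp w
    rw [LieHom.comp_apply] at hw
    have : w = K.incl (FreeLieAlgebra.lift ℚ f w) := hw.symm
    rw [this]
    exact (FreeLieAlgebra.lift ℚ f w).2
  exact key z

theorem scl_central (a : A) (x : DKtTilde A) : ⁅scl a, x⁆ = 0 := by
  obtain ⟨z, rfl⟩ := LieSubmodule.Quotient.surjective_mk' (extIdeal A) x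
  show ⁅qmap (extIdeal A) (of ℚ (ExtGen.s a)), qmap (extIdeal A) z⁆ = 0
  rw [← LieHom.map_lie]
  exact qmap_eq_zero _ (central_aux a z)

/-- The backward map `t_A → t̃_A` on the free Lie algebra. -/
noncomputable def psiTilde (A : Type) [Fintype A] [DecidableEq A] :
    FreeLieAlgebra ℚ (TGen A) →ₗ⁅ℚ⁆ DKtTilde A :=
  FreeLieAlgebra.lift ℚ (fun g => match g with | TGen.t a b h => ttcl a b h)

theorem psiTilde_of (a b : A) (h : a ≠ b) :
    psiTilde A (of ℚ (TGen.t a b h)) = ttcl a b h :=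
  lift_of_apply _ _

theorem psiTilde_vanish : ∀ x ∈ tIdeal A, psiTilde A x = 0 := by
  intro x hx
  have hle : tIdeal A ≤ (psiTilde A).ker := by
    rw [tIdeal, LieSubmodule.lieSpan_le]
    rintro z ((⟨a, b, h, rfl⟩ | ⟨a, b, c, d, h₁, h₂, hac, had, hbc, hbd, rfl⟩) |
      ⟨a, b, c, hab, hbc, hac, rfl⟩) <;>
      rw [SetLike.mem_coe, LieHom.mem_ker]
    · rw [map_sub, psiTilde_of, psiTilde_of]
      exact ttrel1 a b h
    · rw [LieHom.map_lie, psiTilde_of, psiTilde_of]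
      exact ttrel2 a b c d h₁ h₂ hac had hbc hbd
    · rw [LieHom.map_lie, map_add, psiTilde_of, psiTilde_of, psiTilde_of]
      exact ttrel3 a b c hab hbc hac
  simpa using hle hx

/-- The induced morphism `t_A → t̃_A`. -/
noncomputable def psiOne (A : Type) [Fintype A] [DecidableEq A] :
    DKt A →ₗ⁅ℚ⁆ DKtTilde A :=
  qlift (tIdeal A) (psiTilde A) psiTilde_vanish

theorem psiOne_tcl (a b : A) (h : a ≠ b) : psiOne A (tcl a b h) = ttcl a b h := by
  rw [tcl, psiOne, qlift_mk]
  exact psiTilde_of a b h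

/-- The linear map `(A → ℚ) → t̃_A`, `f ↦ ∑ f a • s_a`. -/
noncomputable def sMap (A : Type) [Fintype A] [DecidableEq A] :
    (A → ℚ) →ₗ[ℚ] DKtTilde A where
  toFun f := ∑ a : A, f a • scl a
  map_add' f g := by simp [add_smul, Finset.sum_add_distrib]
  map_smul' t f := by simp [mul_smul, Finset.smul_sum]

theorem sum_lie' {L : Type*} [LieRing L] {ι : Type*} (s : Finset ι) (f : ι → L)
    (x : L) : ⁅∑ i ∈ s, f i, x⁆ = ∑ i ∈ s, ⁅f i, x⁆ := by
  induction s using Finset.cons_induction with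
  | empty => simp
  | cons a s ha ih => rw [Finset.sum_cons, Finset.sum_cons, add_lie, ih]

theorem sMap_central (f : A → ℚ) (x : DKtTilde A) : ⁅sMap A f, x⁆ = 0 := by
  show ⁅∑ a : A, f a • scl a, x⁆ = 0
  rw [sum_lie']
  refine Finset.sum_eq_zero fun a _ => ?_
  rw [smul_lie, scl_central, smul_zero]

theorem sMap_apply (f : A → ℚ) : sMap A f = ∑ a : A, f a • scl a := rfl

theorem sMap_single (a : A) : sMap A (Pi.single a 1) = scl a := by
  rw [sMap_apply]
  rw [Finset.sum_eq_single a (fun b _ hb => by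
    rw [Pi.single_eq_of_ne hb, zero_smul]) (fun h => absurd (Finset.mem_univ a) h)]
  rw [Pi.single_eq_same, one_smul]

/-- The backward Lie algebra morphism `t_A × (A → ℚ) → t̃_A`. -/
noncomputable def psi (A : Type) [Fintype A] [DecidableEq A] :
    DKt A × (A → ℚ) →ₗ⁅ℚ⁆ DKtTilde A :=
  { (psiOne A).toLinearMap ∘ₗ LinearMap.fst ℚ _ _ + sMap A ∘ₗ LinearMap.snd ℚ _ _ with
    map_lie' := by
      rintro ⟨x, f⟩ ⟨y, g⟩
      show psiOne A ⁅x, y⁆ + sMap A ⁅f, g⁆ =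
        ⁅psiOne A x + sMap A f, psiOne A y + sMap A g⁆
      rw [pi_lie_eq_zero, map_zero, add_zero, lie_add, add_lie, add_lie,
        sMap_central, ← lie_skew (psiOne A x) (sMap A g), sMap_central,
        sMap_central, neg_zero, LieHom.map_lie]
      abel }

theorem psi_apply (x : DKt A) (f : A → ℚ) :
    psi A (x, f) = psiOne A x + sMap A f := rfl

/-- The Lie hom `x ↦ (x, 0)` into the product. -/
noncomputable def inlHom (A : Type) [Fintype A] [DecidableEq A] :
    DKt A →ₗ⁅ℚ⁆ DKt A × (A → ℚ) :=
  { LinearMap.inl ℚ (DKt A) (A → ℚ) with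
    map_lie' := by
      intro x y
      exact Prod.ext rfl (zero_lie (0 : A → ℚ)).symm }

theorem phi_comp_psiOne (x : DKt A) : phi A (psiOne A x) = (x, 0) := by
  obtain ⟨z, rfl⟩ := LieSubmodule.Quotient.surjective_mk' (tIdeal A) x
  have h : ((phi A).comp (psiOne A)).comp (qmap (tIdeal A)) =
      (inlHom A).comp (qmap (tIdeal A)) := by
    apply freeLie_hom_ext
    rintro ⟨a, b, hab⟩
    show phi A (psiOne A (qmap (tIdeal A) (of ℚ (TGen.t a b hab)))) =
      inlHom A (qmap (tIdeal A) (of ℚ (TGen.t a b hab)))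
    have h1 : qmap (tIdeal A) (of ℚ (TGen.t a b hab)) = tcl a b hab := rfl
    rw [h1, psiOne_tcl, phi_ttcl]
    rfl
  have hz := LieHom.congr_fun h z
  rw [LieHom.comp_apply, LieHom.comp_apply, LieHom.comp_apply] at hz
  exact hz

theorem psi_comp_phi (x : DKtTilde A) : psi A (phi A x) = x := by
  obtain ⟨z, rfl⟩ := LieSubmodule.Quotient.surjective_mk' (extIdeal A) x
  have h : ((psi A).comp (phi A)).comp (qmap (extIdeal A)) = qmap (extIdeal A) := by
    apply freeLie_hom_ext
    intro g
    show psi A (phi A (qmap (extIdeal A) (of ℚ g))) = qmap (extIdeal A) (of ℚ g)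
    cases g with
    | t a b hab =>
        have h1 : qmap (extIdeal A) (of ℚ (ExtGen.t a b hab)) = ttcl a b hab := rfl
        rw [h1, phi_ttcl, psi_apply, (sMap A).map_zero, add_zero, psiOne_tcl]
    | s a =>
        have h1 : qmap (extIdeal A) (of ℚ (ExtGen.s a)) = scl a := rfl
        rw [h1, phi_scl, psi_apply, map_zero (psiOne A), zero_add, sMap_single]
  have hz := LieHom.congr_fun h z
  rw [LieHom.comp_apply, LieHom.comp_apply] at hz
  exact hz

theorem phi_sMap (f : A → ℚ) : phi A (sMap A f) = (0, f) := by
  rw [sMap_apply]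
  rw [show phi A (∑ a : A, f a • scl a) = ∑ a : A, phi A (f a • scl a) from
    map_sum (phi A).toLinearMap _ _]
  have h1 : ∀ a : A, phi A (f a • scl a) = ((0 : DKt A), Pi.single a (f a)) := by
    intro a
    rw [map_smul (phi A), phi_scl, Prod.smul_mk, smul_zero]
    refine Prod.ext rfl ?_
    ext x
    by_cases hx : x = a <;> simp [Pi.single_apply, hx]
  simp_rw [h1]
  refine Prod.ext ?_ ?_
  · rw [Prod.fst_sum]
    simp
  · rw [Prod.snd_sum]
    simp [Finset.univ_sum_single]

theorem phi_comp_psi (p : DKt A × (A → ℚ)) : phi A (psi A p) = p := by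
  obtain ⟨x, f⟩ := p
  rw [psi_apply, map_add, phi_comp_psiOne, phi_sMap]
  refine Prod.ext (by simp) (by simp)

end Construction

/-- in `t̃_A` the classes of the generators `s_a` are central (hence span a
central abelian Lie subalgebra), and there is an isomorphism of Lie algebras
`t̃_A ≃ t_A × (A → ℚ)` (the second factor carrying the trivial, abelian, bracket)
sending the class of `t_{ab}` to `(t_{ab}, 0)` and the class of `s_a` to `(0, e_a)`,
where `e_a` is the indicator function of `a`. -/
theorem tTilde_decomposition (A : Type) [Fintype A] [DecidableEq A] :
    (∀ (a : A) (x : DKtTilde A), ⁅scl a, x⁆ = 0) ∧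
    (∀ f g : A → ℚ, ⁅f, g⁆ = 0) ∧
    ∃ e : DKtTilde A ≃ₗ⁅ℚ⁆ DKt A × (A → ℚ),
      (∀ (a b : A) (h : a ≠ b), e (ttcl a b h) = (tcl a b h, 0)) ∧
      (∀ a : A, e (scl a) = (0, Pi.single a 1)) := by
  refine ⟨scl_central, pi_lie_eq_zero, ⟨{ phi A with
    invFun := psi A
    left_inv := psi_comp_phi
    right_inv := phi_comp_psi }, fun a b h => phi_ttcl a b h, fun a => phi_scl a⟩⟩
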